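/- Let X be a Cubist subset of ℤ^r. For x ∈ X define I_X(x) = { z ∈ X : x ≤ z ≤ x + (1,...,1) } (componentwise order). Let S ⊆ {1,...,r} and i ∉ S, and let F be the facet consisting of all x' ∈ ℤ^r with x − Σ_{j∉S∪{i}} ε_j ≤ x' ≤ x + Σ_{j∈S} ε_j (an (r−1)-cube containing x). Then F ⊆ X if and only if x + Σ_{j∈S} ε_j ∈ X and x + Σ_{j∈S∪{i}} ε_j ∉ X. In particular, whether F ⊆ X depends only on I_X(x). -/
import Mathlib


/-- The translate `S[ζ] = {x + ζ(1,...,1) : x ∈ S}`. -/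
def trSet {r : ℕ} (S : Set (Fin r → ℤ)) (ζ : ℤ) : Set (Fin r → ℤ) :=
  (fun x => x + fun _ => ζ) '' S

/-- A Cubist subset of `ℤ^r`: `X = X⁻ \ X⁻[-1]` for a nonempty proper ideal `X⁻`. -/
def IsCubist {r : ℕ} (X : Set (Fin r → ℤ)) : Prop :=
  ∃ I : Set (Fin r → ℤ), I.Nonempty ∧ I ≠ Set.univ ∧ IsLowerSet I ∧ X = I \ trSet I (-1)

lemma mem_trSet_neg_one {r : ℕ} (I : Set (Fin r → ℤ)) (y : Fin r → ℤ) :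
    y ∈ trSet I (-1) ↔ (y + fun _ => 1) ∈ I := by
  constructor
  · rintro ⟨z, hz, rfl⟩
    convert hz using 1
    funext j; simp
  · intro h
    exact ⟨y + fun _ => 1, h, by funext j; simp⟩

/-- a facet `F = {x' : x - ∑_{j∉S∪{i}} ε_j ≤ x' ≤ x + ∑_{j∈S} ε_j}`
containing `x ∈ X` is contained in `X` iff `x + ∑_{j∈S} ε_j ∈ X` and
`x + ∑_{j∈S∪{i}} ε_j ∉ X`. -/
theorem facet_in_cubist_iff (r : ℕ) (X : Set (Fin r → ℤ)) (hX : IsCubist X)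
    (x : Fin r → ℤ) (hx : x ∈ X) (S : Finset (Fin r)) (i : Fin r) (hi : i ∉ S) :
    {x' : Fin r → ℤ | ∀ j : Fin r,
        x j - (if j ∈ S ∨ j = i then 0 else 1) ≤ x' j ∧
        x' j ≤ x j + (if j ∈ S then 1 else 0)} ⊆ X ↔
      ((fun j => x j + if j ∈ S then 1 else 0) ∈ X ∧
        (fun j => x j + if j ∈ S ∨ j = i then 1 else 0) ∉ X) := by
  obtain ⟨I, -, -, hlow, rfl⟩ := hX
  set a : Fin r → ℤ := fun j => x j - (if j ∈ S ∨ j = i then 0 else 1) with ha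
  set b : Fin r → ℤ := fun j => x j + if j ∈ S then 1 else 0 with hb
  set c : Fin r → ℤ := fun j => x j + if j ∈ S ∨ j = i then 1 else 0 with hc
  have hac : a + (fun _ => 1) = c := by
    funext j
    by_cases h : j ∈ S ∨ j = i <;> simp [ha, hc, h]
  have hbc : b ≤ c := by
    intro j
    by_cases h : j ∈ S
    · simp [hb, hc, h]
    · by_cases h' : j = i <;> simp [hb, hc, h, h', hi]
  constructor
  · intro hF
    have haF : a ∈ {x' : Fin r → ℤ | ∀ j : Fin r,
        x j - (if j ∈ S ∨ j = i then 0 else 1) ≤ x' j ∧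
        x' j ≤ x j + (if j ∈ S then 1 else 0)} := by
      intro j
      refine ⟨le_refl _, ?_⟩
      by_cases h : j ∈ S
      · simp [ha, h]
      · by_cases h' : j = i <;> simp [ha, h, h', hi]
    have hbF : b ∈ {x' : Fin r → ℤ | ∀ j : Fin r,
        x j - (if j ∈ S ∨ j = i then 0 else 1) ≤ x' j ∧
        x' j ≤ x j + (if j ∈ S then 1 else 0)} := by
      intro j
      refine ⟨?_, le_refl _⟩
      by_cases h : j ∈ S ∨ j = i
      · simp only [hb, if_neg, h, if_pos]
        by_cases h2 : j ∈ S <;> simp [h2]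
      · have h2 : j ∉ S := fun hs => h (Or.inl hs)
        have h3 : j ≠ i := fun hs => h (Or.inr hs)
        simp [hb, h, h2, h3]
    have haX := hF haF
    have hbX := hF hbF
    refine ⟨hbX, ?_⟩
    intro hcX
    exact haX.2 ((mem_trSet_neg_one I a).mpr (by rw [hac]; exact hcX.1))
  · rintro ⟨hbX, hcX⟩ y hy
    have hay : a ≤ y := fun j => (hy j).1
    have hyb : y ≤ b := fun j => (hy j).2
    refine ⟨hlow hyb hbX.1, ?_⟩
    intro hytr
    have h1 : (y + fun _ => 1) ∈ I := (mem_trSet_neg_one I y).mp hytr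
    have hcI : c ∈ I := by
      rw [← hac]
      exact hlow (fun j => by simpa using add_le_add_right (hay j) 1) h1
    have hctr : c ∈ trSet I (-1) := by
      by_contra h
      exact hcX ⟨hcI, h⟩
    have hc1 : (c + fun _ => 1) ∈ I := (mem_trSet_neg_one I c).mp hctr
    have hb1 : (b + fun _ => 1) ∈ I :=
      hlow (fun j => by simpa using add_le_add_right (hbc j) 1) hc1
    exact hbX.2 ((mem_trSet_neg_one I b).mpr hb1)
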